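/- Let A, B be bounded operators between Hilbert spaces with A having closed range, and let A† be its bounded Moore-Penrose inverse. Then AA*A = AB*A if and only if A† B A† = A†. -/

import Mathlib

open ContinuousLinearMap

/-- The orthogonal projection onto the closure of the range of `A`. -/
noncomputable def projCR {E F : Type*} [NormedAddCommGroup E] [InnerProductSpace ℂ E]
    [NormedAddCommGroup F] [InnerProductSpace ℂ F] [CompleteSpace F]
    (A : E →L[ℂ] F) : F →L[ℂ] F :=
  (LinearMap.range (A : E →ₗ[ℂ] F)).topologicalClosure.subtypeL ∘L
    Submodule.orthogonalProjectionOnto (LinearMap.range (A : E →ₗ[ℂ] F)).topologicalClosure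

/-- `Td` is the (bounded) Moore-Penrose inverse of `T`: `T Td = P_T`, `Td T = P_{T*}`,
and `Td T Td = Td`. -/
def IsMPInv {E F : Type*} [NormedAddCommGroup E] [InnerProductSpace ℂ E] [CompleteSpace E]
    [NormedAddCommGroup F] [InnerProductSpace ℂ F] [CompleteSpace F]
    (T : E →L[ℂ] F) (Td : F →L[ℂ] E) : Prop :=
  T ∘L Td = projCR T ∧ Td ∘L T = projCR (adjoint T) ∧ Td ∘L (T ∘L Td) = Td

/-- `projCR A` is self-adjoint. -/
lemma projCR_selfAdjoint {E F : Type*} [NormedAddCommGroup E] [InnerProductSpace ℂ E]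
    [NormedAddCommGroup F] [InnerProductSpace ℂ F] [CompleteSpace F]
    (A : E →L[ℂ] F) : adjoint (projCR A) = projCR A :=
  isSelfAdjoint_starProjection _

/-- `projCR A` fixes the range of `A`. -/
lemma projCR_comp {E F : Type*} [NormedAddCommGroup E] [InnerProductSpace ℂ E]
    [NormedAddCommGroup F] [InnerProductSpace ℂ F] [CompleteSpace F]
    (A : E →L[ℂ] F) : projCR A ∘L A = A := by
  ext x
  simp only [projCR, comp_apply, Submodule.subtypeL_apply]
  exact Submodule.starProjection_eq_self_iff.mpr
    (Submodule.le_topologicalClosure _ (LinearMap.mem_range_self _ x))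

variable {H K : Type*} [NormedAddCommGroup H] [InnerProductSpace ℂ H] [CompleteSpace H]
  [NormedAddCommGroup K] [InnerProductSpace ℂ K] [CompleteSpace K]

theorem stmt19 (A B : H →L[ℂ] K) (Ad : K →L[ℂ] H)
    (hA : IsClosed (LinearMap.range (A : H →ₗ[ℂ] K) : Set K)) (hAd : IsMPInv A Ad) :
    A ∘L ((adjoint A) ∘L A) = A ∘L ((adjoint B) ∘L A) ↔ Ad ∘L (B ∘L Ad) = Ad := by
  obtain ⟨h1, h2, h3⟩ := hAd
  have e1 : (A ∘L Ad) ∘L A = A := by rw [h1, projCR_comp]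
  have p1 : ∀ x, A (Ad (A x)) = A x := by
    intro x; have := congrArg (fun T : H →L[ℂ] K => T x) e1; simpa using this
  have p2 : ∀ x, Ad (A (Ad x)) = Ad x := by
    intro x; have := congrArg (fun T : K →L[ℂ] H => T x) h3; simpa using this
  have e3 : adjoint Ad ∘L adjoint A = A ∘L Ad := by
    rw [← adjoint_comp, h1, projCR_selfAdjoint, ← h1]
  have e4 : adjoint A ∘L adjoint Ad = Ad ∘L A := by
    rw [← adjoint_comp, h2, projCR_selfAdjoint, ← h2]
  have p3 : ∀ x, adjoint Ad (adjoint A x) = A (Ad x) := by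
    intro x; have := congrArg (fun T : K →L[ℂ] K => T x) e3; simpa using this
  have p4 : ∀ x, adjoint A (adjoint Ad x) = Ad (A x) := by
    intro x; have := congrArg (fun T : H →L[ℂ] H => T x) e4; simpa using this
  have p3' : ∀ x, Ad (adjoint Ad (adjoint A x)) = Ad x := fun x => by rw [p3, p2]
  have p4' : ∀ x, adjoint A (adjoint Ad (Ad x)) = Ad x := fun x => by rw [p4, p2]
  have s1 : ∀ x, adjoint Ad (adjoint A (A x)) = A x := fun x => by rw [p3, p1]
  have s2 : ∀ x, A (adjoint A (adjoint Ad x)) = A x := fun x => by rw [p4, p1]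
  constructor
  · intro h
    have h' := congrArg adjoint h
    simp only [adjoint_comp, adjoint_adjoint] at h'
    have q : ∀ x, adjoint A (A (adjoint A x)) = adjoint A (B (adjoint A x)) := by
      intro x; have := congrArg (fun T : K →L[ℂ] H => T x) h'; simpa using this
    ext x
    simp only [comp_apply]
    calc Ad (B (Ad x))
        = Ad (adjoint Ad (adjoint A (B (adjoint A (adjoint Ad (Ad x)))))) := by
          rw [p3', p4']
      _ = Ad (adjoint Ad (adjoint A (A (adjoint A (adjoint Ad (Ad x)))))) := by rw [q]
      _ = Ad x := by rw [p3', p4', p2]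
  · intro h
    have h' := congrArg adjoint h
    simp only [adjoint_comp] at h'
    have r' : ∀ x, adjoint Ad (adjoint B (adjoint Ad x)) = adjoint Ad x := by
      intro x; have := congrArg (fun T : H →L[ℂ] K => T x) h'; simpa using this
    ext x
    simp only [comp_apply]
    calc A (adjoint A (A x))
        = A (adjoint A (adjoint Ad (adjoint B (adjoint Ad (adjoint A (A x)))))) := by
          rw [r', s1]
      _ = A (adjoint B (A x)) := by rw [s2, s1]
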